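/- arXiv:1309.4258 — 6 statements merged into one kernel-verified Lean document; each statement's English description precedes it below -/
import Mathlib

section
/- Let a, b be real numbers with a > 0, b > 0 and a - b + 1 ≠ 0. Then for every natural number n, Σ_{k=0}^{n} Γ(k+a)/Γ(k+b) = (1/(a-b+1))·[Γ(n+a+1)/Γ(n+b) - Γ(a)/Γ(b-1)]. -/
open Finset

/-- Prudnikov's summation formula for ratios of Gamma functions. -/
theorem gamma_ratio_sum
    (a b : ℝ) (ha : 0 < a) (hb : 1 < b) (hab : a - b + 1 ≠ 0) :
    ∀ n : ℕ,
      ∑ k ∈ Finset.range (n + 1), Real.Gamma ((k : ℝ) + a) / Real.Gamma ((k : ℝ) + b) =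
        (1 / (a - b + 1)) *
          (Real.Gamma ((n : ℝ) + a + 1) / Real.Gamma ((n : ℝ) + b)
            - Real.Gamma a / Real.Gamma (b - 1)) := by
  have hb1 : (0:ℝ) < b - 1 := by linarith
  intro n
  induction n with
  | zero =>
    have hGb : Real.Gamma b = (b - 1) * Real.Gamma (b - 1) := by
      have := Real.Gamma_add_one hb1.ne'
      rw [sub_add_cancel] at this
      exact this
    have hGa : Real.Gamma (a + 1) = a * Real.Gamma a := Real.Gamma_add_one ha.ne'
    simp only [Finset.range_one, Finset.sum_singleton, Nat.cast_zero, zero_add]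
    rw [hGa, hGb]
    have hGb1 : Real.Gamma (b - 1) ≠ 0 := (Real.Gamma_pos_of_pos hb1).ne'
    field_simp
    ring
  | succ n ih =>
    rw [Finset.sum_range_succ, ih]
    push_cast
    have hnb : (0:ℝ) < (n:ℝ) + b := by
      have := Nat.cast_nonneg (α := ℝ) n; linarith
    have hna : (0:ℝ) < (n:ℝ) + a + 1 := by
      have := Nat.cast_nonneg (α := ℝ) n; linarith
    have hy : Real.Gamma ((n:ℝ) + b) ≠ 0 := (Real.Gamma_pos_of_pos hnb).ne'
    have h1 : Real.Gamma ((n:ℝ) + 1 + b) = ((n:ℝ) + b) * Real.Gamma ((n:ℝ) + b) := by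
      rw [show (n:ℝ) + 1 + b = ((n:ℝ) + b) + 1 by ring, Real.Gamma_add_one hnb.ne']
    have h2 : Real.Gamma ((n:ℝ) + 1 + a + 1)
        = ((n:ℝ) + a + 1) * Real.Gamma ((n:ℝ) + a + 1) := by
      rw [show (n:ℝ) + 1 + a + 1 = ((n:ℝ) + a + 1) + 1 by ring, Real.Gamma_add_one hna.ne']
    have h3 : Real.Gamma ((n:ℝ) + 1 + a) = Real.Gamma ((n:ℝ) + a + 1) := by ring_nf
    rw [h1, h2, h3]
    field_simp
    ring
end

section
/- Let α > 0 and β ≥ 0. Define x_1 = 1/(α+β+1) and x_w = ((α(w-1)+β)/(αw+β+1))·x_{w-1} for w ≥ 2. Then Σ_{w=1}^{∞} x_w = 1, i.e., (x_w)_{w≥1} is a probability distribution on the positive integers. -/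
open Finset Filter Real

/-- the weight distribution sums to 1. -/
theorem weight_distribution_sums_to_one
    (α β : ℝ) (hα : 0 < α) (hβ : 0 ≤ β)
    (x : ℕ → ℝ)
    (hx1 : x 1 = 1 / (α + β + 1))
    (hrec : ∀ w : ℕ, 2 ≤ w → x w = ((α * ((w : ℝ) - 1) + β) / (α * w + β + 1)) * x (w - 1)) :
    HasSum (fun w : ℕ => x (w + 1)) 1 := by
  have hden : ∀ w : ℕ, 0 < α * w + β + 1 := fun w => by positivity
  -- positivity of x n for n ≥ 1
  have hxpos : ∀ n : ℕ, 1 ≤ n → 0 < x n := by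
    intro n hn
    induction n with
    | zero => omega
    | succ m ih =>
      rcases Nat.lt_or_ge m 1 with hm | hm
      · interval_cases m
        rw [hx1]; positivity
      · have h2 : 2 ≤ m + 1 := by omega
        rw [hrec (m+1) h2]
        have hxm := ih hm
        have hm' : (1:ℝ) ≤ (m:ℝ) := by exact_mod_cast hm
        have h1 : 0 < α * ((((m:ℕ)+1 : ℕ):ℝ) - 1) + β := by push_cast; nlinarith
        have h2' : 0 < α * (((m:ℕ)+1 : ℕ):ℝ) + β + 1 := hden (m+1)
        simp only [Nat.add_sub_cancel]
        positivity
  -- key step: (α(n+1)+β+1) x(n+1) = (αn+β) x n for n ≥ 1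
  have hkey : ∀ n : ℕ, 1 ≤ n → (α * (n+1) + β + 1) * x (n+1) = (α * n + β) * x n := by
    intro n hn
    have h := hrec (n+1) (by omega)
    have hd := (hden (n+1)).ne'
    rw [Nat.add_sub_cancel] at h
    push_cast at h hd ⊢
    rw [h]
    field_simp
    ring
  set a : ℕ → ℝ := fun n => (α * n + β) * x n with ha
  have hapos : ∀ n : ℕ, 1 ≤ n → 0 < a n := by
    intro n hn
    have : (1:ℝ) ≤ (n:ℝ) := by exact_mod_cast hn
    have := hxpos n hn
    have h1 : 0 < α * (n:ℝ) + β := by nlinarith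
    exact mul_pos h1 this
  -- partial sums
  have hS : ∀ n : ℕ, 1 ≤ n → ∑ w ∈ range n, x (w+1) = 1 - a n := by
    intro n hn
    induction n with
    | zero => omega
    | succ m ih =>
      rcases Nat.lt_or_ge m 1 with hm | hm
      · interval_cases m
        simp only [Finset.range_one, Finset.sum_singleton, ha]
        have h0 : α + β + 1 ≠ 0 := by positivity
        have hx1' : x 1 * (α + β + 1) = 1 := by rw [hx1]; field_simp
        push_cast
        field_simp
        simp only [Finset.sum_range_one, zero_add]
        linear_combination hx1'
      · rw [Finset.sum_range_succ, ih hm]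
        have hk := hkey m hm
        simp only [ha]
        push_cast at hk ⊢
        nlinarith [hk]
  -- the bound: a n ≤ A * exp (-c * H n)
  set c : ℝ := 1 / (α + β + 1) with hc
  have hcpos : 0 < c := by positivity
  set H : ℕ → ℝ := fun n => ∑ k ∈ range n, 1 / ((k:ℝ) + 1) with hH
  set A : ℝ := a 1 * Real.exp c with hA
  have hbound : ∀ n : ℕ, 1 ≤ n → a n ≤ A * Real.exp (-c * H n) := by
    intro n hn
    induction n with
    | zero => omega
    | succ m ih =>
      rcases Nat.lt_or_ge m 1 with hm | hm
      · interval_cases m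
        have : H 1 = 1 := by simp [hH]
        rw [this, hA]
        rw [mul_assoc, ← Real.exp_add]
        simp
      · -- a (m+1) = (α(m+1)+β)/(α(m+1)+β+1) * a m
        have hk := hkey m hm
        have hd := hden (m+1)
        have hstep : a (m+1) = (1 - 1/(α * (m+1) + β + 1)) * a m := by
          simp only [ha]
          push_cast at hk hd ⊢
          rw [← hk]
          field_simp
          ring
        have hm' : (1:ℝ) ≤ (m:ℝ) := by exact_mod_cast hm
        have hdle : α * (m+1) + β + 1 ≤ (α + β + 1) * ((m:ℝ)+1) := by nlinarith
        have hfrac : c / ((m:ℝ)+1) ≤ 1/(α * ((m:ℕ)+1 : ℕ) + β + 1) := by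
          push_cast
          rw [hc, div_div]
          apply one_div_le_one_div_of_le
          · push_cast at hd; linarith
          · push_cast at hdle ⊢; linarith
        have h1 : (1 : ℝ) - 1/(α * ((m:ℕ)+1:ℕ) + β + 1) ≤ Real.exp (-(c/((m:ℝ)+1))) := by
          have := Real.add_one_le_exp (-(c/((m:ℝ)+1)))
          linarith
        have hnn : 0 ≤ (1 : ℝ) - 1/(α * ((m:ℕ)+1:ℕ) + β + 1) := by
          have hd' := hden (m+1)
          have : 1/(α * ((m:ℕ)+1:ℕ) + β + 1) ≤ 1 := by
            rw [div_le_one hd']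
            push_cast
            nlinarith
          linarith
        have hapos' := (hapos m hm).le
        calc a (m+1) = (1 - 1/(α * ((m:ℕ)+1:ℕ) + β + 1)) * a m := by push_cast at hstep ⊢; exact hstep
          _ ≤ Real.exp (-(c/((m:ℝ)+1))) * a m := mul_le_mul_of_nonneg_right h1 hapos'
          _ ≤ Real.exp (-(c/((m:ℝ)+1))) * (A * Real.exp (-c * H m)) := by
              exact mul_le_mul_of_nonneg_left (ih hm) (Real.exp_pos _).le
          _ = A * Real.exp (-c * H (m+1)) := by
              simp only [hH, Finset.sum_range_succ]
              rw [mul_comm (rexp _), mul_assoc, ← Real.exp_add]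
              congr 1
              rw [Real.exp_eq_exp]
              ring
  -- tendsto a n → 0
  have hHtend : Tendsto H atTop atTop := Real.tendsto_sum_range_one_div_nat_succ_atTop
  have hexp : Tendsto (fun n => A * Real.exp (-c * H n)) atTop (nhds 0) := by
    rw [show (0:ℝ) = A * 0 by ring]
    apply Tendsto.const_mul
    apply Real.tendsto_exp_atBot.comp
    have : Tendsto (fun n => c * H n) atTop atTop := hHtend.const_mul_atTop hcpos
    simpa [neg_mul] using tendsto_neg_atBot_iff.mpr this
  have hatend : Tendsto a atTop (nhds 0) := by
    apply tendsto_of_tendsto_of_tendsto_of_le_of_le' tendsto_const_nhds hexp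
    · filter_upwards [eventually_ge_atTop 1] with n hn using (hapos n hn).le
    · filter_upwards [eventually_ge_atTop 1] with n hn using hbound n hn
  -- conclude
  rw [hasSum_iff_tendsto_nat_of_nonneg (fun i => (hxpos (i+1) (by omega)).le)]
  have : Tendsto (fun n => 1 - a n) atTop (nhds 1) := by
    simpa using tendsto_const_nhds.sub hatend
  apply this.congr'
  filter_upwards [eventually_ge_atTop 1] with n hn using (hS n hn).symm
end

section
/- Let N ≥ 3 and let α₁, α₂ > 0, β ≥ 0 with α = α₁+α₂. Define x_{d,w} by the recursion: x_{N-1,1} = 1/(α+β+1); x_{d,1} = 0 for d ≠ N-1; x_{d,w} = 0 for d outside [N-1,(N-1)w]; and x_{d,w} = (1/(αw+β+1))·[α₁(w-1)x_{d,w-1} + α₂(w-1)x_{d-1,w-1} + β x_{d-(N-1),w-1}] for w ≥ 2, N-1 ≤ d ≤ (N-1)w. Then Σ_{w=1}^{∞} Σ_{d=N-1}^{(N-1)w} x_{d,w} = 1, i.e., (x_{d,w}) is a two-dimensional probability distribution. -/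
open Finset Filter

/-- (x_{d,w}) is a two-dimensional probability distribution. -/
theorem two_dim_distribution_sums_to_one
    (N : ℕ) (hN : 3 ≤ N)
    (α₁ α₂ α β : ℝ) (hα₁ : 0 < α₁) (hα₂ : 0 < α₂) (hβ : 0 ≤ β) (hα : α = α₁ + α₂)
    (x : ℤ → ℕ → ℝ)
    (hx11 : x ((N : ℤ) - 1) 1 = 1 / (α + β + 1))
    (hx1 : ∀ d : ℤ, d ≠ (N : ℤ) - 1 → x d 1 = 0)
    (hx0 : ∀ (d : ℤ) (w : ℕ), 1 ≤ w → (d < (N : ℤ) - 1 ∨ ((N : ℤ) - 1) * w < d) → x d w = 0)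
    (hrec : ∀ (d : ℤ) (w : ℕ), 2 ≤ w → (N : ℤ) - 1 ≤ d → d ≤ ((N : ℤ) - 1) * w →
      x d w = (1 / (α * w + β + 1)) *
        (α₁ * ((w : ℝ) - 1) * x d (w - 1) + α₂ * ((w : ℝ) - 1) * x (d - 1) (w - 1)
          + β * x (d - ((N : ℤ) - 1)) (w - 1))) :
    HasSum
      (fun w : ℕ =>
        ∑ d ∈ Finset.Icc ((N : ℤ) - 1) (((N : ℤ) - 1) * (w + 1)), x d (w + 1)) 1 := by
  have hα0 : 0 < α := hα ▸ add_pos hα₁ hα₂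
  have hN2 : (2:ℤ) ≤ (N:ℤ) - 1 := by
    have : (3:ℤ) ≤ (N:ℤ) := by exact_mod_cast hN
    omega
  set S : ℕ → ℝ := fun w => ∑ d ∈ Finset.Icc ((N : ℤ) - 1) (((N : ℤ) - 1) * (w : ℤ)), x d w
    with hSdef
  have hden : ∀ t : ℝ, 0 ≤ t → (0:ℝ) < α * t + β + 1 := by
    intro t ht; nlinarith
  -- sums over larger intervals equal S
  have hbig : ∀ (w : ℕ), 1 ≤ w → ∀ a b : ℤ, a ≤ (N:ℤ)-1 → ((N:ℤ)-1)*w ≤ b →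
      ∑ d ∈ Finset.Icc a b, x d w = S w := by
    intro w hw a b ha hb
    refine (Finset.sum_subset (Finset.Icc_subset_Icc ha hb) ?_).symm
    intro d _ hnd
    rw [Finset.mem_Icc, not_and_or, not_le, not_le] at hnd
    exact hx0 d w hw hnd
  -- shifting the summation variable
  have hshift : ∀ (c : ℤ) (w : ℕ) (a b : ℤ),
      ∑ d ∈ Finset.Icc a b, x (d - c) w = ∑ d ∈ Finset.Icc (a - c) (b - c), x d w := by
    intro c w a b
    have h : Finset.Icc a b = (Finset.Icc (a - c) (b - c)).map (addRightEmbedding c) := by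
      rw [Finset.map_add_right_Icc]; congr 1 <;> ring
    rw [h, Finset.sum_map]
    simp [addRightEmbedding]
  -- the recursion for S
  have hrecS : ∀ w : ℕ, 1 ≤ w →
      S (w+1) = ((α*w+β)/(α*(w+1)+β+1)) * S w := by
    intro w hw
    have hwr : (1:ℝ) ≤ (w:ℝ) := by exact_mod_cast hw
    have h1 : S (w+1) = ∑ d ∈ Finset.Icc ((N:ℤ)-1) (((N:ℤ)-1)*((w:ℕ)+1:ℕ)),
        (1 / (α * ((w:ℝ)+1) + β + 1)) *
        (α₁ * (w:ℝ) * x d w + α₂ * (w:ℝ) * x (d - 1) w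
          + β * x (d - ((N : ℤ) - 1)) w) := by
      rw [hSdef]
      refine Finset.sum_congr rfl ?_
      intro d hd
      rw [Finset.mem_Icc] at hd
      have := hrec d (w+1) (by omega) hd.1 (by exact_mod_cast hd.2)
      simpa [Nat.add_sub_cancel, Nat.cast_add, Nat.cast_one, add_sub_cancel_right] using this
    have hI0 : ∑ d ∈ Finset.Icc ((N:ℤ)-1) (((N:ℤ)-1)*((w:ℕ)+1:ℕ)), x d w = S w := by
      apply hbig w hw _ _ le_rfl
      push_cast
      nlinarith
    have hI1 : ∑ d ∈ Finset.Icc ((N:ℤ)-1) (((N:ℤ)-1)*((w:ℕ)+1:ℕ)), x (d - 1) w = S w := by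
      rw [hshift]
      apply hbig w hw _ _ (by omega)
      push_cast
      nlinarith
    have hI2 : ∑ d ∈ Finset.Icc ((N:ℤ)-1) (((N:ℤ)-1)*((w:ℕ)+1:ℕ)),
        x (d - ((N:ℤ)-1)) w = S w := by
      rw [hshift]
      apply hbig w hw _ _ (by omega)
      push_cast
      nlinarith
    rw [h1]
    rw [← Finset.mul_sum]
    simp only [Finset.sum_add_distrib, ← Finset.mul_sum, hI0, hI1, hI2]
    have hd1 : (0:ℝ) < α * ((w:ℝ)+1) + β + 1 := hden _ (by linarith)
    field_simp
    rw [hα]; ring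
  -- the product
  set R : ℕ → ℝ := fun n => ∏ j ∈ Finset.range n, (α*((j:ℝ)+1)+β)/(α*((j:ℝ)+1)+β+1)
    with hRdef
  have hR0 : R 0 = 1 := by simp [hRdef]
  have hRsucc : ∀ n : ℕ, R (n+1) = R n * ((α*((n:ℝ)+1)+β)/(α*((n:ℝ)+1)+β+1)) := by
    intro n; rw [hRdef]; exact Finset.prod_range_succ _ n
  have hRnonneg : ∀ n, 0 ≤ R n := by
    intro n
    apply Finset.prod_nonneg
    intro j _
    have hj : (0:ℝ) ≤ (j:ℝ)+1 := by positivity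
    apply div_nonneg <;> nlinarith
  -- closed form for S
  have hSR : ∀ w : ℕ, S (w+1) = R w / (α*((w:ℝ)+1)+β+1) := by
    intro w
    induction w with
    | zero =>
      have : S 1 = x ((N:ℤ)-1) 1 := by
        rw [hSdef]
        norm_num
      rw [this, hx11, hR0]
      norm_num
    | succ w ih =>
      have h := hrecS (w+1) (by omega)
      rw [ih] at h
      rw [h, hRsucc w]
      have h1 : (0:ℝ) < α * ((w:ℝ)+1) + β + 1 := hden _ (by positivity)
      have h2 : (0:ℝ) < α * ((w:ℝ)+1+1) + β + 1 := hden _ (by positivity)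
      have h3 : (0:ℝ) < α * ((w:ℝ)+2) + β + 1 := hden _ (by positivity)
      push_cast
      field_simp
  -- telescoping
  have htele : ∀ w : ℕ, S (w+1) = R w - R (w+1) := by
    intro w
    rw [hSR w, hRsucc w]
    have h1 : (0:ℝ) < α * ((w:ℝ)+1) + β + 1 := hden _ (by positivity)
    field_simp
    ring
  have hpartial : ∀ n : ℕ, ∑ w ∈ Finset.range n, S (w+1) = 1 - R n := by
    intro n
    simp only [htele]
    rw [Finset.sum_range_sub' R n, hR0]
  -- R n → 0
  have hexp : ∀ n, R n ≤ Real.exp (-∑ j ∈ Finset.range n, 1/(α*((j:ℝ)+1)+β+1)) := by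
    intro n
    have : Real.exp (-∑ j ∈ Finset.range n, 1/(α*((j:ℝ)+1)+β+1))
        = ∏ j ∈ Finset.range n, Real.exp (-(1/(α*((j:ℝ)+1)+β+1))) := by
      rw [← Real.exp_sum]
      congr 1
      rw [← Finset.sum_neg_distrib]
    rw [this, hRdef]
    apply Finset.prod_le_prod
    · intro j _
      have hj : (0:ℝ) ≤ (j:ℝ)+1 := by positivity
      apply div_nonneg <;> nlinarith
    · intro j _
      have h1 : (0:ℝ) < α * ((j:ℝ)+1) + β + 1 := hden _ (by positivity)
      have key : (α*((j:ℝ)+1)+β)/(α*((j:ℝ)+1)+β+1) = -(1/(α*((j:ℝ)+1)+β+1)) + 1 := by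
        field_simp
        ring
      rw [key]
      exact Real.add_one_le_exp _
  have hdiv : Tendsto (fun n => ∑ j ∈ Finset.range n, 1/(α*((j:ℝ)+1)+β+1)) atTop atTop := by
    have hc : (0:ℝ) < 1/(α+β+1) := by positivity
    have hharm := Real.tendsto_sum_range_one_div_nat_succ_atTop.const_mul_atTop hc
    apply tendsto_atTop_mono _ hharm
    intro n
    rw [Finset.mul_sum]
    apply Finset.sum_le_sum
    intro j _
    have hj : (0:ℝ) ≤ (j:ℝ) := by positivity
    rw [div_mul_div_comm, one_mul]
    apply one_div_le_one_div_of_le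
    · nlinarith
    · nlinarith
  have hRlim : Tendsto R atTop (nhds 0) := by
    apply tendsto_of_tendsto_of_tendsto_of_le_of_le tendsto_const_nhds
      (Real.tendsto_exp_neg_atTop_nhds_zero.comp hdiv) hRnonneg hexp
  have hSnonneg : ∀ w : ℕ, 0 ≤ S (w+1) := by
    intro w
    rw [hSR w]
    have h1 : (0:ℝ) < α * ((w:ℝ)+1) + β + 1 := hden _ (by positivity)
    exact div_nonneg (hRnonneg w) h1.le
  have hfun : (fun w : ℕ =>
      ∑ d ∈ Finset.Icc ((N : ℤ) - 1) (((N : ℤ) - 1) * (w + 1)), x d (w + 1))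
      = fun w : ℕ => S (w+1) := by
    funext w
    rw [hSdef]
    congr 2
  rw [hfun, hasSum_iff_tendsto_nat_of_nonneg hSnonneg]
  have : Tendsto (fun n : ℕ => 1 - R n) atTop (nhds 1) := by
    simpa using tendsto_const_nhds.sub hRlim
  simpa [hpartial] using this
end

section
/- Let N ≥ 3 and α₁, α₂ > 0, β > 0, α = α₁+α₂, with x_{d,w} defined by the N-interactions recursion. Then for every integer d ≥ N-1 there exists a positive integer w with N-1 ≤ d ≤ (N-1)w such that x_{d,w} > 0. Consequently u_d := Σ_{w≥⌈d/(N-1)⌉} x_{d,w} > 0 for every d ≥ N-1. -/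
/-- for every degree d there is a weight w with x_{d,w} > 0, hence u_d > 0. -/
theorem u_d_positive
    (N : ℕ) (hN : 3 ≤ N)
    (α₁ α₂ α β : ℝ) (hα₁ : 0 < α₁) (hα₂ : 0 < α₂) (hβ : 0 < β) (hα : α = α₁ + α₂)
    (x : ℤ → ℕ → ℝ)
    (hx11 : x ((N : ℤ) - 1) 1 = 1 / (α + β + 1))
    (hx1 : ∀ d : ℤ, d ≠ (N : ℤ) - 1 → x d 1 = 0)
    (hx0 : ∀ (d : ℤ) (w : ℕ), 1 ≤ w → (d < (N : ℤ) - 1 ∨ ((N : ℤ) - 1) * w < d) → x d w = 0)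
    (hrec : ∀ (d : ℤ) (w : ℕ), 2 ≤ w → (N : ℤ) - 1 ≤ d → d ≤ ((N : ℤ) - 1) * w →
      x d w = (1 / (α * w + β + 1)) *
        (α₁ * ((w : ℝ) - 1) * x d (w - 1) + α₂ * ((w : ℝ) - 1) * x (d - 1) (w - 1)
          + β * x (d - ((N : ℤ) - 1)) (w - 1)))
    (hnonneg : ∀ (d : ℤ) (w : ℕ), 0 ≤ x d w)
    (hsummable : ∀ d : ℤ, Summable (fun w : ℕ => x d (w + 1))) :
    ∀ d : ℤ, (N : ℤ) - 1 ≤ d →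
      (∃ w : ℕ, 1 ≤ w ∧ d ≤ ((N : ℤ) - 1) * w ∧ 0 < x d w) ∧
      0 < ∑' w : ℕ, x d (w + 1) := by
  have hN2 : (2 : ℤ) ≤ (N : ℤ) - 1 := by omega
  have key : ∀ d : ℤ, (N : ℤ) - 1 ≤ d →
      ∃ w : ℕ, 1 ≤ w ∧ d ≤ ((N : ℤ) - 1) * w ∧ 0 < x d w := by
    refine Int.le_induction ?_ ?_
    · refine ⟨1, le_refl 1, by push_cast; linarith, ?_⟩
      rw [hx11]
      exact div_pos one_pos (by rw [hα]; linarith)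
    · intro d hd ih
      obtain ⟨w, hw1, hwd, hwx⟩ := ih
      have hle : d + 1 ≤ ((N : ℤ) - 1) * (w + 1 : ℕ) := by
        push_cast
        nlinarith
      refine ⟨w + 1, by omega, hle, ?_⟩
      rw [hrec (d + 1) (w + 1) (by omega) (by linarith) hle]
      have hden : 0 < 1 / (α * ((w : ℝ) + 1) + β + 1) := by
        apply div_pos one_pos
        have : (0 : ℝ) ≤ (w : ℝ) := Nat.cast_nonneg w
        nlinarith
      have hsimp : (w + 1 : ℕ) - 1 = w := by omega
      rw [hsimp]
      push_cast
      have hmid : 0 < α₂ * ((w : ℝ) + 1 - 1) * x (d + 1 - 1) w := by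
        have : (d : ℤ) + 1 - 1 = d := by ring
        rw [this]
        have hw' : (1 : ℝ) ≤ (w : ℝ) := by exact_mod_cast hw1
        exact mul_pos (mul_pos hα₂ (by linarith)) hwx
      have h1 : 0 ≤ α₁ * ((w : ℝ) + 1 - 1) * x (d + 1) w := by
        have hw0 : (0 : ℝ) ≤ (w : ℝ) := Nat.cast_nonneg w
        exact mul_nonneg (mul_nonneg hα₁.le (by linarith)) (hnonneg _ _)
      have h3 : 0 ≤ β * x (d + 1 - ((N : ℤ) - 1)) w := by
        exact mul_nonneg hβ.le (hnonneg _ _)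
      exact mul_pos hden (by linarith)
  intro d hd
  obtain ⟨w, hw1, hwd, hwx⟩ := key d hd
  refine ⟨⟨w, hw1, hwd, hwx⟩, ?_⟩
  have hterm : 0 < x d ((w - 1) + 1) := by
    have : (w - 1) + 1 = w := by omega
    rwa [this]
  calc (0 : ℝ) < x d ((w - 1) + 1) := hterm
    _ ≤ ∑' w : ℕ, x d (w + 1) :=
      Summable.le_tsum (hsummable d) (w - 1) (fun i _ => hnonneg d (i + 1))
end

section
/- Let N ≥ 3, α₁, α₂ > 0, β ≥ 0, α = α₁+α₂, and let ξ_w (w ≥ 2) take values 0, 1, N-1 with probabilities α₁(w-1)/(α(w-1)+β), α₂(w-1)/(α(w-1)+β), β/(α(w-1)+β), with ξ_1 ≡ N-1, all independent. Then Var(ξ_w) = α₁α₂/α² + O(1/w) as w → ∞, and Var(S_w) = (α₁α₂/α²)·w + O(log w) as w → ∞, where S_w = ξ_1+···+ξ_w. -/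
open MeasureTheory ProbabilityTheory Finset

set_option maxHeartbeats 2000000

/-- asymptotic variance of ξ_w and of S_w. -/
theorem variance_xi_and_Sw
    (N : ℕ) (hN : 3 ≤ N)
    (α₁ α₂ α β : ℝ) (hα₁ : 0 < α₁) (hα₂ : 0 < α₂) (hβ : 0 ≤ β) (hα : α = α₁ + α₂)
    (Ω : Type*) [MeasurableSpace Ω] (μ : Measure Ω) [IsProbabilityMeasure μ]
    (ξ : ℕ → Ω → ℤ) (hξmeas : ∀ i, Measurable (ξ i))
    (hξzero : ∀ ω, ξ 0 ω = 0)
    (hξ1 : ∀ ω, ξ 1 ω = (N : ℤ) - 1)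
    (hξval : ∀ w : ℕ, 2 ≤ w → ∀ ω, ξ w ω = 0 ∨ ξ w ω = 1 ∨ ξ w ω = (N : ℤ) - 1)
    (hξ0 : ∀ w : ℕ, 2 ≤ w →
      μ {ω | ξ w ω = 0} = ENNReal.ofReal (α₁ * ((w : ℝ) - 1) / (α * ((w : ℝ) - 1) + β)))
    (hξone : ∀ w : ℕ, 2 ≤ w →
      μ {ω | ξ w ω = 1} = ENNReal.ofReal (α₂ * ((w : ℝ) - 1) / (α * ((w : ℝ) - 1) + β)))
    (hξN : ∀ w : ℕ, 2 ≤ w →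
      μ {ω | ξ w ω = (N : ℤ) - 1} = ENNReal.ofReal (β / (α * ((w : ℝ) - 1) + β)))
    (hindep : iIndepFun ξ μ)
    (S : ℕ → Ω → ℤ)
    (hS : ∀ (w : ℕ) (ω : Ω), S w ω = ∑ i ∈ Finset.Icc 1 w, ξ i ω) :
    (∃ C : ℝ, ∃ w₀ : ℕ, ∀ w : ℕ, w₀ ≤ w →
      |variance (fun ω => ((ξ w ω : ℝ))) μ - α₁ * α₂ / α ^ 2| ≤ C / w) ∧
    (∃ C : ℝ, ∃ w₀ : ℕ, ∀ w : ℕ, w₀ ≤ w →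
      |variance (fun ω => ((S w ω : ℝ))) μ - (α₁ * α₂ / α ^ 2) * w| ≤ C * Real.log w) := by
  have hαpos : 0 < α := by rw [hα]; linarith
  have hN3 : (3:ℝ) ≤ (N:ℝ) := by exact_mod_cast hN
  have hNZ3 : (3:ℤ) ≤ (N:ℤ) := by exact_mod_cast hN
  set m : ℝ := (N : ℝ) - 1 with hm_def
  have hm2 : (2:ℝ) ≤ m := by rw [hm_def]; linarith
  have hm0 : (0:ℝ) ≤ m := by linarith
  set L : ℝ := α₁ * α₂ / α ^ 2 with hL_def
  have hL0 : 0 ≤ L := by rw [hL_def]; positivity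
  set X : ℕ → Ω → ℝ := fun i ω => ((ξ i ω : ℝ)) with hX_def
  have hcast : Measurable (fun z : ℤ => (z : ℝ)) := measurable_from_top
  have hXmeas : ∀ i, Measurable (X i) := fun i => hcast.comp (hξmeas i)
  have hXval : ∀ i ω, ξ i ω = 0 ∨ ξ i ω = 1 ∨ ξ i ω = (N:ℤ) - 1 := by
    intro i ω
    match i with
    | 0 => exact Or.inl (hξzero ω)
    | 1 => exact Or.inr (Or.inr (hξ1 ω))
    | (n+2) => exact hξval (n+2) (by omega) ω
  have hXbd : ∀ i, ∀ ω, |X i ω| ≤ (N:ℝ) := by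
    intro i ω
    rcases hXval i ω with h | h | h <;>
      · simp only [hX_def, h]
        push_cast
        rw [abs_le]
        constructor <;> linarith
  have hMem : ∀ i, MemLp (X i) 2 μ := fun i =>
    (memLp_top_of_bound (hXmeas i).aestronglyMeasurable _
      (Filter.Eventually.of_forall (hXbd i))).mono_exponent le_top
  -- exact variance formula for w ≥ 2
  have hprob : ∀ w : ℕ, 2 ≤ w →
      variance (X w) μ =
        (α₂ * ((w:ℝ)-1) / (α*((w:ℝ)-1)+β)) + m^2 * (β / (α*((w:ℝ)-1)+β))
        - ((α₂ * ((w:ℝ)-1) / (α*((w:ℝ)-1)+β)) + m * (β / (α*((w:ℝ)-1)+β)))^2 := by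
    intro w hw
    have hw1 : (2:ℝ) ≤ (w:ℝ) := by exact_mod_cast hw
    set D : ℝ := α*((w:ℝ)-1)+β with hD_def
    have hD : 0 < D := by rw [hD_def]; nlinarith
    set p1 : ℝ := α₂*((w:ℝ)-1)/D with hp1_def
    set p2 : ℝ := β/D with hp2_def
    have hp1 : 0 ≤ p1 := by rw [hp1_def]; apply div_nonneg _ hD.le; nlinarith
    have hp2 : 0 ≤ p2 := div_nonneg hβ hD.le
    set A := {ω | ξ w ω = 1} with hA_def
    set B := {ω | ξ w ω = (N:ℤ)-1} with hB_def
    have hA : MeasurableSet A := hξmeas w (measurableSet_singleton 1)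
    have hB : MeasurableSet B := hξmeas w (measurableSet_singleton ((N:ℤ)-1))
    have hμA : (μ A).toReal = p1 := by
      rw [hA_def, hξone w hw, ENNReal.toReal_ofReal]
      exact hp1
    have hμB : (μ B).toReal = p2 := by
      rw [hB_def, hξN w hw, ENNReal.toReal_ofReal]
      exact hp2
    have c1 : (0:ℤ) ≠ (N:ℤ)-1 := by omega
    have c2 : (1:ℤ) ≠ (N:ℤ)-1 := by omega
    have hXpt : X w = A.indicator (fun _ => (1:ℝ)) + B.indicator (fun _ => m) := by
      funext ω
      rcases hξval w hw ω with h | h | h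
      · simp [hX_def, Set.indicator_apply, hA_def, hB_def, h, c1, c2]
      · simp [hX_def, Set.indicator_apply, hA_def, hB_def, h, c2]
      · simp only [hX_def, Pi.add_apply, Set.indicator_apply, hA_def, hB_def,
          Set.mem_setOf_eq, h, if_neg (Ne.symm c2), if_pos rfl]
        push_cast
        ring
    have hXsq : X w ^ 2 = A.indicator (fun _ => (1:ℝ)) + B.indicator (fun _ => m^2) := by
      funext ω
      have := congrFun hXpt ω
      simp only [Pi.pow_apply, Pi.add_apply] at this ⊢
      rw [this]
      by_cases h1 : ω ∈ A <;> by_cases h2 : ω ∈ B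
      · exfalso
        rw [hA_def, Set.mem_setOf_eq] at h1
        rw [hB_def, Set.mem_setOf_eq] at h2
        omega
      all_goals simp [h1, h2]
    have hI1 : μ[X w] = p1 + m * p2 := by
      rw [hXpt, integral_add' ((integrable_const (1:ℝ)).indicator hA)
        ((integrable_const m).indicator hB),
        integral_indicator_const _ hA, integral_indicator_const _ hB, measureReal_def, measureReal_def, hμA, hμB]
      simp [smul_eq_mul]
      ring
    have hI2 : μ[X w ^ 2] = p1 + m^2 * p2 := by
      rw [hXsq, integral_add' ((integrable_const (1:ℝ)).indicator hA)
        ((integrable_const (m^2)).indicator hB),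
        integral_indicator_const _ hA, integral_indicator_const _ hB, measureReal_def, measureReal_def, hμA, hμB]
      simp [smul_eq_mul]
      ring
    rw [variance_eq_sub (hMem w), hI1, hI2]
  -- the O(1/w) bound on Var ξ_w
  set C₁ : ℝ := 2*α₂*β/α^2 + (2*β/α)*(2*m^2+2*m) with hC₁_def
  have hC₁0 : 0 ≤ C₁ := by rw [hC₁_def]; positivity
  have hC1 : ∀ w : ℕ, 2 ≤ w → |variance (X w) μ - L| ≤ C₁ / w := by
    intro w hw
    have hw1 : (2:ℝ) ≤ (w:ℝ) := by exact_mod_cast hw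
    have hwpos : (0:ℝ) < (w:ℝ) := by linarith
    set D : ℝ := α*((w:ℝ)-1)+β with hD_def
    have hD : 0 < D := by rw [hD_def]; nlinarith
    have hD2 : α * (w:ℝ) ≤ 2 * D := by rw [hD_def]; nlinarith
    set p1 : ℝ := α₂*((w:ℝ)-1)/D with hp1_def
    set p2 : ℝ := β/D with hp2_def
    have hp1 : 0 ≤ p1 := by rw [hp1_def]; apply div_nonneg _ hD.le; nlinarith
    have hp2 : 0 ≤ p2 := div_nonneg hβ hD.le
    have hp1le : p1 ≤ 1 := by
      rw [hp1_def, div_le_one hD, hD_def, hα]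
      nlinarith
    have hp2le : p2 ≤ 1 := by
      rw [hp2_def, div_le_one hD, hD_def]
      nlinarith
    set q : ℝ := α₂ / α with hq_def
    have hq0 : 0 ≤ q := by rw [hq_def]; positivity
    have hq1 : q ≤ 1 := by
      rw [hq_def, div_le_one hαpos, hα]; linarith
    have hpq : p1 - q = -(α₂*β)/(α*D) := by
      rw [hp1_def, hq_def, hD_def]
      have hD'' : α*((w:ℝ)-1)+β ≠ 0 := hD.ne'
      rw [div_sub_div _ _ hD'' hαpos.ne', div_eq_div_iff (mul_ne_zero hD'' hαpos.ne') (mul_ne_zero hαpos.ne' hD''), hα]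
      ring
    have habs1 : |p1 - q| ≤ 2*α₂*β/(α^2*(w:ℝ)) := by
      rw [hpq, neg_div, abs_neg, abs_of_nonneg (by positivity)]
      rw [div_le_div_iff₀ (by positivity) (by positivity)]
      nlinarith [mul_le_mul_of_nonneg_left hD2 (mul_nonneg hα₂.le hβ)]
    have habs2 : p2 ≤ 2*β/(α*(w:ℝ)) := by
      rw [hp2_def, div_le_div_iff₀ hD (by positivity)]
      nlinarith [mul_le_mul_of_nonneg_left hD2 hβ]
    have hLq : L = q - q^2 := by
      rw [hL_def, hq_def, hα]
      field_simp
      ring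
    have hdiff : variance (X w) μ - L
        = (p1 - q)*(1 - (p1 + q)) + p2*(m^2 - 2*m*p1 - m^2*p2) := by
      rw [hprob w hw, hLq, ← hD_def, ← hp1_def, ← hp2_def]
      ring
    have habs3 : |1 - (p1 + q)| ≤ 1 := by
      rw [abs_le]; constructor <;> linarith
    have habs4 : |m^2 - 2*m*p1 - m^2*p2| ≤ 2*m^2 + 2*m := by
      rw [abs_le]
      constructor <;>
        nlinarith [mul_le_mul_of_nonneg_left hp1le (by linarith : (0:ℝ) ≤ 2*m),
          mul_le_mul_of_nonneg_left hp2le (by positivity : (0:ℝ) ≤ m^2),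
          mul_nonneg (by linarith : (0:ℝ) ≤ 2*m) hp1,
          mul_nonneg (by positivity : (0:ℝ) ≤ m^2) hp2]
    calc |variance (X w) μ - L|
        ≤ |(p1 - q)*(1 - (p1 + q))| + |p2*(m^2 - 2*m*p1 - m^2*p2)| := by
          rw [hdiff]; exact abs_add_le _ _
      _ = |p1 - q| * |1 - (p1 + q)| + p2 * |m^2 - 2*m*p1 - m^2*p2| := by
          rw [abs_mul, abs_mul, abs_of_nonneg hp2]
      _ ≤ (2*α₂*β/(α^2*(w:ℝ)))*1 + (2*β/(α*(w:ℝ)))*(2*m^2 + 2*m) := by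
          apply add_le_add
          · exact mul_le_mul habs1 habs3 (abs_nonneg _) (by positivity)
          · exact mul_le_mul habs2 habs4 (abs_nonneg _) (by positivity)
      _ = C₁ / w := by
          rw [hC₁_def]
          field_simp
  constructor
  · exact ⟨C₁, 2, fun w hw => hC1 w hw⟩
  -- second part
  refine ⟨C₁ + L, 3, fun w hw => ?_⟩
  have hw2 : 2 ≤ w := by omega
  have hw1 : 1 ≤ w := by omega
  have hwR : (3:ℝ) ≤ (w:ℝ) := by exact_mod_cast hw
  have hSvar : variance (fun ω => ((S w ω : ℝ))) μ = ∑ i ∈ Icc 1 w, variance (X i) μ := by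
    have h1 : (fun ω => ((S w ω : ℝ))) = ∑ i ∈ Icc 1 w, X i := by
      funext ω
      rw [hS]
      push_cast
      simp [hX_def, Finset.sum_apply]
    rw [h1]
    exact IndepFun.variance_sum (fun i _ => hMem i)
      (fun i _ j _ hij => (hindep.indepFun hij).comp hcast hcast)
  have hvar1 : variance (X 1) μ = 0 := by
    have hX1 : X 1 = fun _ => m := by
      funext ω
      simp only [hX_def, hξ1 ω, hm_def]
      push_cast
      ring
    rw [hX1, variance_eq_sub (memLp_const m)]
    simp [Pi.pow_apply, integral_const]
  have herase : (Icc 1 w).erase 1 = Icc 2 w := by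
    ext x
    simp only [Finset.mem_erase, Finset.mem_Icc]
    omega
  have hsplit : ∑ i ∈ Icc 1 w, variance (X i) μ = ∑ i ∈ Icc 2 w, variance (X i) μ := by
    rw [← Finset.add_sum_erase _ _ (by simp [Finset.mem_Icc]; omega : (1:ℕ) ∈ Icc 1 w),
      hvar1, zero_add, herase]
  have hcard : ((Icc 2 w).card : ℝ) = (w:ℝ) - 1 := by
    rw [Nat.card_Icc]
    have : w + 1 - 2 = w - 1 := by omega
    rw [this]
    push_cast [Nat.cast_sub hw1]
    ring
  have hTsplit : (∑ i ∈ Icc 2 w, variance (X i) μ) - L * (w:ℝ)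
      = (∑ i ∈ Icc 2 w, (variance (X i) μ - L)) - L := by
    rw [Finset.sum_sub_distrib, Finset.sum_const, nsmul_eq_mul, hcard]
    ring
  have hharm : ∑ i ∈ Icc 2 w, ((i:ℝ))⁻¹ ≤ Real.log w := by
    have h1 := harmonic_le_one_add_log w
    have h2 : ((harmonic w : ℚ) : ℝ) = ∑ i ∈ Icc 1 w, ((i:ℝ))⁻¹ := by
      rw [harmonic_eq_sum_Icc]; push_cast; rfl
    have h3 : ∑ i ∈ Icc 1 w, ((i:ℝ))⁻¹ = 1 + ∑ i ∈ Icc 2 w, ((i:ℝ))⁻¹ := by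
      rw [← Finset.add_sum_erase _ _ (by simp [Finset.mem_Icc]; omega : (1:ℕ) ∈ Icc 1 w),
        herase]
      norm_num
    rw [h2, h3] at h1
    linarith
  have hlog : 1 ≤ Real.log w := by
    rw [Real.le_log_iff_exp_le (by linarith)]
    calc Real.exp 1 ≤ 2.7182818286 := Real.exp_one_lt_d9.le
      _ ≤ 3 := by norm_num
      _ ≤ w := hwR
  calc |variance (fun ω => ((S w ω : ℝ))) μ - L * (w:ℝ)|
      = |(∑ i ∈ Icc 2 w, (variance (X i) μ - L)) - L| := by
        rw [hSvar, hsplit, hTsplit]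
    _ ≤ |∑ i ∈ Icc 2 w, (variance (X i) μ - L)| + |L| := abs_sub _ _
    _ ≤ (∑ i ∈ Icc 2 w, |variance (X i) μ - L|) + L := by
        rw [abs_of_nonneg hL0]
        exact add_le_add_left (Finset.abs_sum_le_sum_abs _ _) L
    _ ≤ (∑ i ∈ Icc 2 w, C₁ / (i:ℝ)) + L := by
        apply add_le_add_left
        apply Finset.sum_le_sum
        intro i hi
        exact hC1 i (Finset.mem_Icc.mp hi).1
    _ = C₁ * (∑ i ∈ Icc 2 w, ((i:ℝ))⁻¹) + L := by
        rw [Finset.mul_sum]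
        simp [div_eq_mul_inv]
    _ ≤ C₁ * Real.log w + L := by
        exact add_le_add_left (mul_le_mul_of_nonneg_left hharm hC₁0) L
    _ ≤ (C₁ + L) * Real.log w := by nlinarith
end

section
/- Let N ≥ 3, α₁, α₂ > 0, β ≥ 0, α = α₁+α₂, and let S_w = ξ_1+···+ξ_w with ξ_i independent, ξ_1 ≡ N-1, and ξ_w ∈ {0,1,N-1} for w ≥ 2 as in the N-interactions representation. Fix 0 < ε < 1/6 and set f = (α/α₂)d. Then there exist constants c > 0 and d₀ such that for all d ≥ d₀ and all integers w with w < f - f^{1/2+ε}, P(S_w = d) ≤ exp(-c·f^{2ε} + O(log f)); in particular Σ_{w < f - f^{1/2+ε}} P(S_w = d) = o(f^{-(1+1/α)}) as d → ∞. -/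
open MeasureTheory ProbabilityTheory Finset Filter

lemma my_exp_le_quad {u : ℝ} (h0 : 0 ≤ u) (h1 : u ≤ 1) : Real.exp u ≤ 1 + u + u ^ 2 := by
  have h := Real.exp_bound' h0 h1 (n := 2) (by norm_num)
  simp [Finset.sum_range_succ] at h
  nlinarith [sq_nonneg u]

lemma my_exp_chord {t M : ℝ} (ht : 0 ≤ t) (hM : 1 ≤ M) :
    Real.exp t ≤ 1 + (Real.exp (t * M) - 1) / M := by
  have hM0 : 0 < M := lt_of_lt_of_le one_pos hM
  have ha : (0:ℝ) ≤ 1 - 1 / M := by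
    have : 1 / M ≤ 1 := by rw [div_le_one hM0]; exact hM
    linarith
  have hb : (0:ℝ) ≤ 1 / M := by positivity
  have h := convexOn_exp.2 (Set.mem_univ (0:ℝ)) (Set.mem_univ (t * M)) ha hb (by ring)
  simp only [smul_eq_mul, mul_zero, Real.exp_zero, mul_one] at h
  have harg : 0 + 1 / M * (t * M) = t := by field_simp; ring
  rw [harg] at h
  have heq : 1 - 1 / M + 1 / M * Real.exp (t * M) = 1 + (Real.exp (t * M) - 1) / M := by
    field_simp; ring
  linarith [h, heq.symm.le]

lemma my_harmonic_sqrt (w : ℕ) :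
    ∑ i ∈ Finset.Icc 2 w, (1:ℝ) / ((i:ℝ) - 1) ≤ 2 * Real.sqrt ((w:ℝ) - 1) := by
  induction w with
  | zero => simp [Real.sqrt_nonneg]
  | succ w ih =>
    rcases Nat.eq_zero_or_pos w with h0 | h1
    · subst h0; norm_num
    · rw [Finset.sum_Icc_succ_top (by omega : 2 ≤ w + 1)]
      have hw1 : (1:ℝ) ≤ (w:ℝ) := by exact_mod_cast h1
      have hs := Real.sq_sqrt (by linarith : (0:ℝ) ≤ (w:ℝ))
      have hu := Real.sq_sqrt (by linarith : (0:ℝ) ≤ (w:ℝ) - 1)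
      set s := Real.sqrt (w:ℝ) with hsdef
      set u := Real.sqrt ((w:ℝ) - 1) with hudef
      have hs1 : 1 ≤ s := by
        rw [hsdef, show (1:ℝ) = Real.sqrt 1 by simp]
        exact Real.sqrt_le_sqrt hw1
      have hu0 : 0 ≤ u := Real.sqrt_nonneg _
      have hus : u ≤ s := Real.sqrt_le_sqrt (by linarith)
      have hsw : s ≤ (w:ℝ) := by nlinarith
      have hwpos : (0:ℝ) < (w:ℝ) := by linarith
      have key : 1 ≤ 2 * (s - u) * (w:ℝ) := by
        nlinarith [mul_nonneg (sub_nonneg.2 hus) (show (0:ℝ) ≤ 2 * (w:ℝ) - s - u by linarith)]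
      have h2 : (1:ℝ) / ((w:ℝ) + 1 - 1) ≤ 2 * (s - u) := by
        rw [show (w:ℝ) + 1 - 1 = (w:ℝ) by ring, div_le_iff₀ hwpos]
        linarith
      push_cast at ih h2 ⊢
      rw [show (w:ℝ) + 1 - 1 = (w:ℝ) by ring]
      have : (1:ℝ) / (w:ℝ) ≤ 2 * (s - u) := by
        rw [show (w:ℝ) + 1 - 1 = (w:ℝ) by ring] at h2; exact h2
      linarith

set_option maxHeartbeats 4000000 in
/-- Hoeffding lower-tail bound for the representation S_w. -/
theorem hoeffding_lower_tail
    (N : ℕ) (hN : 3 ≤ N)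
    (α₁ α₂ α β : ℝ) (hα₁ : 0 < α₁) (hα₂ : 0 < α₂) (hβ : 0 ≤ β) (hα : α = α₁ + α₂)
    (Ω : Type*) [MeasurableSpace Ω] (μ : Measure Ω) [IsProbabilityMeasure μ]
    (ξ : ℕ → Ω → ℤ) (hξmeas : ∀ i, Measurable (ξ i))
    (hξzero : ∀ ω, ξ 0 ω = 0)
    (hξ1 : ∀ ω, ξ 1 ω = (N : ℤ) - 1)
    (hξval : ∀ w : ℕ, 2 ≤ w → ∀ ω, ξ w ω = 0 ∨ ξ w ω = 1 ∨ ξ w ω = (N : ℤ) - 1)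
    (hξ0 : ∀ w : ℕ, 2 ≤ w →
      μ {ω | ξ w ω = 0} = ENNReal.ofReal (α₁ * ((w : ℝ) - 1) / (α * ((w : ℝ) - 1) + β)))
    (hξone : ∀ w : ℕ, 2 ≤ w →
      μ {ω | ξ w ω = 1} = ENNReal.ofReal (α₂ * ((w : ℝ) - 1) / (α * ((w : ℝ) - 1) + β)))
    (hξN : ∀ w : ℕ, 2 ≤ w →
      μ {ω | ξ w ω = (N : ℤ) - 1} = ENNReal.ofReal (β / (α * ((w : ℝ) - 1) + β)))
    (hindep : iIndepFun ξ μ)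
    (S : ℕ → Ω → ℤ)
    (hS : ∀ (w : ℕ) (ω : Ω), S w ω = ∑ i ∈ Finset.Icc 1 w, ξ i ω)
    (ε : ℝ) (hε0 : 0 < ε) (hε : ε < 1 / 6)
    (f : ℕ → ℝ) (hf : ∀ d : ℕ, f d = (α / α₂) * d) :
    (∃ c : ℝ, 0 < c ∧ ∃ C : ℝ, ∃ d₀ : ℕ, ∀ d : ℕ, d₀ ≤ d → ∀ w : ℕ,
      (w : ℝ) < f d - (f d) ^ ((1 : ℝ) / 2 + ε) →
      (μ {ω | S w ω = (d : ℤ)}).toReal ≤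
        Real.exp (-c * (f d) ^ (2 * ε) + C * Real.log (f d))) ∧
    Filter.Tendsto
      (fun d : ℕ =>
        (∑ w ∈ (Finset.range (Nat.ceil (f d) + 1)).filter
            (fun w : ℕ => (w : ℝ) < f d - (f d) ^ ((1 : ℝ) / 2 + ε)),
          (μ {ω | S w ω = (d : ℤ)}).toReal) * (f d) ^ (1 + 1 / α))
      Filter.atTop (nhds 0) := by
  classical
  have hα0 : 0 < α := by rw [hα]; linarith
  set M : ℝ := (N : ℝ) - 1 with hMdef
  have hN3 : (3:ℝ) ≤ (N:ℝ) := by exact_mod_cast hN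
  have hM2 : (2:ℝ) ≤ M := by rw [hMdef]; linarith
  have hM0 : (0:ℝ) < M := by linarith
  have hM1 : (1:ℝ) ≤ M := by linarith
  have hNZ : (3:ℤ) ≤ (N:ℤ) := by exact_mod_cast hN
  have hNe0 : ((N:ℤ) - 1) ≠ 0 := by omega
  have hNe1 : ((N:ℤ) - 1) ≠ 1 := by omega
  set r : ℝ := α₂ / α with hrdef
  have hr0 : 0 < r := div_pos hα₂ hα0
  set K : ℝ := β * M / α with hKdef
  have hK0 : 0 ≤ K := by positivity
  set c₆ : ℝ := 1 + r with hc6def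
  have hc60 : 0 < c₆ := by linarith
  set γ : ℝ := r / (4 * M * c₆) with hγdef
  have hγ0 : 0 < γ := by positivity
  set c : ℝ := γ * r / 4 with hcdef
  have hc0 : 0 < c := by positivity
  -- real-valued summands
  set Y : ℕ → Ω → ℝ := fun i ω => ((ξ i ω : ℤ) : ℝ) with hYdef
  have hYmeas : ∀ i, Measurable (Y i) :=
    fun i => (measurable_of_countable _).comp (hξmeas i)
  have hYindep : iIndepFun Y μ :=
    hindep.comp (fun _ => (Int.cast : ℤ → ℝ)) (fun _ => measurable_of_countable _)
  -- expectations
  set e : ℕ → ℝ := fun i =>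
      if i ≤ 1 then M else (α₂ * ((i:ℝ) - 1) + β * M) / (α * ((i:ℝ) - 1) + β) with hedef
  have hDpos : ∀ i : ℕ, 2 ≤ i → 0 < α * ((i:ℝ) - 1) + β := by
    intro i hi
    have : (2:ℝ) ≤ (i:ℝ) := by exact_mod_cast hi
    nlinarith
  have he_nonneg : ∀ i : ℕ, 0 ≤ e i := by
    intro i
    simp only [hedef]
    split_ifs with h
    · linarith
    · have hi2 : 2 ≤ i := by omega
      have h1 : (2:ℝ) ≤ (i:ℝ) := by exact_mod_cast hi2
      have := hDpos i hi2
      apply div_nonneg _ this.le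
      nlinarith
  -- per-coordinate mgf bound
  have hmgf : ∀ t : ℝ, 0 ≤ t → t * M ≤ 1 → ∀ i : ℕ, 1 ≤ i →
      mgf (Y i) μ t ≤ Real.exp ((t + t ^ 2 * M) * e i) := by
    intro t ht htM i hi
    have htM0 : 0 ≤ t * M := by positivity
    have hexpM : Real.exp (t * M) - 1 ≤ t * M + (t * M) ^ 2 := by
      have := my_exp_le_quad htM0 htM
      linarith
    by_cases h2 : 2 ≤ i
    · -- three-point distribution
      set A0 : Set Ω := {ω | ξ i ω = 0} with hA0def
      set A1 : Set Ω := {ω | ξ i ω = 1} with hA1def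
      set A2 : Set Ω := {ω | ξ i ω = (N:ℤ) - 1} with hA2def
      have hA0 : MeasurableSet A0 := hξmeas i (MeasurableSet.singleton 0)
      have hA1 : MeasurableSet A1 := hξmeas i (MeasurableSet.singleton 1)
      have hA2 : MeasurableSet A2 := hξmeas i (MeasurableSet.singleton ((N:ℤ) - 1))
      have hpt : ∀ ω, Real.exp (t * Y i ω) =
          A0.indicator (fun _ => Real.exp (t * 0)) ω +
          A1.indicator (fun _ => Real.exp (t * 1)) ω +
          A2.indicator (fun _ => Real.exp (t * M)) ω := by
        intro ω
        rcases hξval i h2 ω with h | h | h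
        · have m0 : ω ∈ A0 := h
          have m1 : ω ∉ A1 := by simp only [hA1def, Set.mem_setOf_eq, h]; omega
          have m2 : ω ∉ A2 := by simp only [hA2def, Set.mem_setOf_eq, h]; omega
          rw [Set.indicator_of_mem m0, Set.indicator_of_notMem m1,
            Set.indicator_of_notMem m2]
          simp [hYdef, h]
        · have m0 : ω ∉ A0 := by simp only [hA0def, Set.mem_setOf_eq, h]; omega
          have m1 : ω ∈ A1 := h
          have m2 : ω ∉ A2 := by simp only [hA2def, Set.mem_setOf_eq, h]; omega
          rw [Set.indicator_of_mem m1, Set.indicator_of_notMem m0,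
            Set.indicator_of_notMem m2]
          simp [hYdef, h]
        · have m0 : ω ∉ A0 := by simp only [hA0def, Set.mem_setOf_eq, h]; omega
          have m1 : ω ∉ A1 := by simp only [hA1def, Set.mem_setOf_eq, h]; omega
          have m2 : ω ∈ A2 := h
          rw [Set.indicator_of_mem m2, Set.indicator_of_notMem m0,
            Set.indicator_of_notMem m1]
          have hcast : Y i ω = M := by
            simp only [hYdef, h, hMdef]; push_cast; ring
          rw [hcast]; ring
      have i0 : Integrable (A0.indicator fun _ => Real.exp (t * 0)) μ :=
        (integrable_const _).indicator hA0
      have i1 : Integrable (A1.indicator fun _ => Real.exp (t * 1)) μ :=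
        (integrable_const _).indicator hA1
      have i2 : Integrable (A2.indicator fun _ => Real.exp (t * M)) μ :=
        (integrable_const _).indicator hA2
      have hmgfi : mgf (Y i) μ t =
          (μ A0).toReal * Real.exp (t * 0) + (μ A1).toReal * Real.exp (t * 1) +
          (μ A2).toReal * Real.exp (t * M) := by
        calc mgf (Y i) μ t
            = ∫ ω, (A0.indicator (fun _ => Real.exp (t * 0)) ω +
                A1.indicator (fun _ => Real.exp (t * 1)) ω +
                A2.indicator (fun _ => Real.exp (t * M)) ω) ∂μ := by
              rw [mgf]; exact integral_congr_ae (Filter.Eventually.of_forall hpt)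
          _ = (∫ ω, (A0.indicator (fun _ => Real.exp (t * 0)) ω +
                A1.indicator (fun _ => Real.exp (t * 1)) ω) ∂μ) +
              ∫ ω, A2.indicator (fun _ => Real.exp (t * M)) ω ∂μ :=
              integral_add (i0.add i1) i2
          _ = (∫ ω, A0.indicator (fun _ => Real.exp (t * 0)) ω ∂μ) +
              (∫ ω, A1.indicator (fun _ => Real.exp (t * 1)) ω ∂μ) +
              ∫ ω, A2.indicator (fun _ => Real.exp (t * M)) ω ∂μ := by
              rw [integral_add i0 i1]
          _ = (μ A0).toReal * Real.exp (t * 0) + (μ A1).toReal * Real.exp (t * 1) +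
              (μ A2).toReal * Real.exp (t * M) := by
              rw [integral_indicator_const _ hA0, integral_indicator_const _ hA1,
                integral_indicator_const _ hA2]
              simp [smul_eq_mul, measureReal_def]
      -- express the probabilities
      have hi1 : (2:ℝ) ≤ (i:ℝ) := by exact_mod_cast h2
      have hD := hDpos i h2
      have hp0 : (μ A0).toReal = α₁ * ((i:ℝ) - 1) / (α * ((i:ℝ) - 1) + β) := by
        rw [hA0def, hξ0 i h2, ENNReal.toReal_ofReal]
        apply div_nonneg _ hD.le; nlinarith
      have hp1 : (μ A1).toReal = α₂ * ((i:ℝ) - 1) / (α * ((i:ℝ) - 1) + β) := by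
        rw [hA1def, hξone i h2, ENNReal.toReal_ofReal]
        apply div_nonneg _ hD.le; nlinarith
      have hp2 : (μ A2).toReal = β / (α * ((i:ℝ) - 1) + β) := by
        rw [hA2def, hξN i h2, ENNReal.toReal_ofReal]
        exact div_nonneg hβ hD.le
      set p0 := (μ A0).toReal with hp0def
      set p1 := (μ A1).toReal with hp1def
      set p2 := (μ A2).toReal with hp2def
      have hp0n : 0 ≤ p0 := ENNReal.toReal_nonneg
      have hp1n : 0 ≤ p1 := ENNReal.toReal_nonneg
      have hp2n : 0 ≤ p2 := ENNReal.toReal_nonneg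
      have hDne : α * ((i:ℝ) - 1) + β ≠ 0 := ne_of_gt hD
      have hsum : p0 + p1 + p2 = 1 := by
        rw [hp0, hp1, hp2, ← add_div, ← add_div,
          div_eq_one_iff_eq hDne, hα]
        ring
      have hei : p1 + p2 * M = e i := by
        simp only [hp1, hp2, hedef]
        rw [if_neg (by omega : ¬ i ≤ 1), div_mul_eq_mul_div, ← add_div]
      have hchord := my_exp_chord ht hM1
      have hEnn : 0 ≤ Real.exp (t * M) - 1 := by
        have h' := Real.exp_le_exp.mpr htM0
        simp only [Real.exp_zero] at h'
        linarith
      have step1 : mgf (Y i) μ t ≤ 1 + e i * ((Real.exp (t * M) - 1) / M) := by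
        rw [hmgfi]
        have h1 : p1 * Real.exp (t * 1) ≤ p1 * (1 + (Real.exp (t * M) - 1) / M) := by
          rw [mul_one]; exact mul_le_mul_of_nonneg_left hchord hp1n
        have hident : p0 * Real.exp (t * 0) + p1 * (1 + (Real.exp (t * M) - 1) / M) +
            p2 * Real.exp (t * M) =
            (p0 + p1 + p2) + (p1 + p2 * M) * ((Real.exp (t * M) - 1) / M) := by
          field_simp
          simp only [mul_zero, Real.exp_zero]
          ring
        rw [hsum, hei] at hident
        linarith
      have step2 : e i * ((Real.exp (t * M) - 1) / M) ≤ e i * (t + t ^ 2 * M) := by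
        apply mul_le_mul_of_nonneg_left _ (he_nonneg i)
        rw [div_le_iff₀ hM0]
        nlinarith
      refine step1.trans ((add_le_add_right step2 1).trans ?_)
      have := Real.add_one_le_exp (e i * (t + t ^ 2 * M))
      rw [show (t + t ^ 2 * M) * e i = e i * (t + t ^ 2 * M) by ring]
      linarith
    · -- i = 1 : constant N - 1
      have h1 : i = 1 := by omega
      subst h1
      have hY1 : Y 1 = fun _ => M := by
        funext ω
        simp only [hYdef, hξ1 ω, hMdef]
        push_cast; ring
      rw [hY1, mgf_const]
      have he1 : e 1 = M := by rw [hedef]; simp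
      rw [he1]
      apply Real.exp_le_exp.mpr
      nlinarith
  -- sum of expectations bound
  have hm : ∀ w : ℕ, ∑ i ∈ Finset.Icc 1 w, e i ≤ M + r * w + K * (2 * Real.sqrt w) := by
    intro w
    have hsq0 : 0 ≤ Real.sqrt (w:ℝ) := Real.sqrt_nonneg _
    rcases Nat.eq_zero_or_pos w with h0 | h1
    · subst h0; simp
      positivity
    · have hins : Finset.Icc 1 w = insert 1 (Finset.Icc 2 w) := by
        ext x; simp only [Finset.mem_Icc, Finset.mem_insert]; omega
      rw [hins, Finset.sum_insert (by simp [Finset.mem_Icc])]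
      have he1 : e 1 = M := by simp only [hedef]; norm_num
      have hstep : ∀ i ∈ Finset.Icc 2 w, e i ≤ r + K * (1 / ((i:ℝ) - 1)) := by
        intro i hi
        obtain ⟨hi2, hiw⟩ := Finset.mem_Icc.1 hi
        have hi1 : (2:ℝ) ≤ (i:ℝ) := by exact_mod_cast hi2
        have hD := hDpos i hi2
        have hD2 : 0 < α * ((i:ℝ) - 1) := by nlinarith
        have hnum : 0 ≤ α₂ * ((i:ℝ) - 1) + β * M := by nlinarith
        simp only [hedef]
        rw [if_neg (by omega : ¬ i ≤ 1)]
        have step : (α₂ * ((i:ℝ) - 1) + β * M) / (α * ((i:ℝ) - 1) + β) ≤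
            (α₂ * ((i:ℝ) - 1) + β * M) / (α * ((i:ℝ) - 1)) := by
          apply div_le_div_of_nonneg_left hnum hD2
          linarith
        refine step.trans (le_of_eq ?_)
        have hine : (i:ℝ) - 1 ≠ 0 := by linarith
        rw [hrdef, hKdef]
        field_simp
      have hsum2 : ∑ i ∈ Finset.Icc 2 w, e i ≤
          ∑ i ∈ Finset.Icc 2 w, (r + K * (1 / ((i:ℝ) - 1))) := Finset.sum_le_sum hstep
      have hcard : ((Finset.Icc 2 w).card : ℝ) ≤ (w:ℝ) := by
        have : (Finset.Icc 2 w).card ≤ w := by rw [Nat.card_Icc]; omega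
        exact_mod_cast this
      have hharm : ∑ i ∈ Finset.Icc 2 w, (1:ℝ) / ((i:ℝ) - 1) ≤ 2 * Real.sqrt (w:ℝ) := by
        refine (my_harmonic_sqrt w).trans ?_
        have : Real.sqrt ((w:ℝ) - 1) ≤ Real.sqrt (w:ℝ) := Real.sqrt_le_sqrt (by linarith)
        linarith
      have hsplit : ∑ i ∈ Finset.Icc 2 w, (r + K * (1 / ((i:ℝ) - 1))) =
          (Finset.Icc 2 w).card * r + K * ∑ i ∈ Finset.Icc 2 w, (1:ℝ) / ((i:ℝ) - 1) := by
        rw [Finset.sum_add_distrib, Finset.sum_const, Finset.mul_sum]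
        simp [nsmul_eq_mul]
      have hKharm : K * ∑ i ∈ Finset.Icc 2 w, (1:ℝ) / ((i:ℝ) - 1) ≤
          K * (2 * Real.sqrt (w:ℝ)) := mul_le_mul_of_nonneg_left hharm hK0
      have hcr : ((Finset.Icc 2 w).card : ℝ) * r ≤ (w:ℝ) * r :=
        mul_le_mul_of_nonneg_right hcard hr0.le
      rw [he1]
      have : ∑ i ∈ Finset.Icc 2 w, e i ≤ r * w + K * (2 * Real.sqrt w) := by
        rw [hsplit] at hsum2
        calc ∑ i ∈ Finset.Icc 2 w, e i ≤ _ := hsum2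
          _ ≤ (w:ℝ) * r + K * (2 * Real.sqrt (w:ℝ)) := by linarith
          _ = r * w + K * (2 * Real.sqrt w) := by ring
      linarith
  -- Chernoff bound
  have key : ∀ t : ℝ, 0 ≤ t → t * M ≤ 1 → ∀ d w : ℕ,
      (μ {ω | S w ω = (d : ℤ)}).toReal ≤
        Real.exp (-t * d + (t + t ^ 2 * M) * (∑ i ∈ Finset.Icc 1 w, e i)) := by
    intro t ht htM d w
    set X : Ω → ℝ := fun ω => ((S w ω : ℤ) : ℝ) with hXdef
    have hSmeas : Measurable (S w) := by
      have : S w = fun ω => ∑ i ∈ Finset.Icc 1 w, ξ i ω := funext (hS w)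
      rw [this]
      exact Finset.measurable_sum _ (fun i _ => hξmeas i)
    have hXmeas : Measurable X := (measurable_of_countable _).comp hSmeas
    have hXsum : X = ∑ i ∈ Finset.Icc 1 w, Y i := by
      funext ω
      simp only [hXdef, Finset.sum_apply, hYdef]
      rw [hS w ω]
      push_cast
      rfl
    have hYle : ∀ i ∈ Finset.Icc 1 w, ∀ ω, Y i ω ≤ M := by
      intro i hi ω
      obtain ⟨hi1, _⟩ := Finset.mem_Icc.1 hi
      by_cases h2 : 2 ≤ i
      · rcases hξval i h2 ω with h | h | h <;>
          simp only [hYdef, h] <;> push_cast <;> simp only [hMdef] <;> push_cast <;> linarith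
      · have : i = 1 := by omega
        subst this
        simp only [hYdef, hξ1 ω, hMdef]
        push_cast; linarith
    have hXle : ∀ ω, X ω ≤ (w:ℝ) * M := by
      intro ω
      have : X ω = ∑ i ∈ Finset.Icc 1 w, Y i ω := by rw [hXsum]; simp [Finset.sum_apply]
      rw [this]
      calc ∑ i ∈ Finset.Icc 1 w, Y i ω ≤ ∑ i ∈ Finset.Icc 1 w, M :=
            Finset.sum_le_sum (fun i hi => hYle i hi ω)
        _ = ((Finset.Icc 1 w).card : ℝ) * M := by rw [Finset.sum_const, nsmul_eq_mul]
        _ ≤ (w:ℝ) * M := by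
            apply mul_le_mul_of_nonneg_right _ hM0.le
            have : (Finset.Icc 1 w).card ≤ w := by rw [Nat.card_Icc]; omega
            exact_mod_cast this
    have hint : Integrable (fun ω => Real.exp (t * X ω)) μ := by
      apply Integrable.mono' (integrable_const (Real.exp (t * ((w:ℝ) * M))))
        ((hXmeas.const_mul t).exp.aestronglyMeasurable)
      apply ae_of_all
      intro ω
      rw [Real.norm_eq_abs, abs_of_pos (Real.exp_pos _)]
      exact Real.exp_le_exp.mpr (mul_le_mul_of_nonneg_left (hXle ω) ht)
    have hsub : {ω | S w ω = (d:ℤ)} ⊆ {ω | (d:ℝ) ≤ X ω} := by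
      intro ω hω
      simp only [Set.mem_setOf_eq] at hω ⊢
      simp only [hXdef, hω]
      push_cast
      exact le_refl _
    calc (μ {ω | S w ω = (d:ℤ)}).toReal
        ≤ (μ {ω | (d:ℝ) ≤ X ω}).toReal :=
          ENNReal.toReal_mono (measure_ne_top μ _) (measure_mono hsub)
      _ ≤ Real.exp (-t * (d:ℝ)) * mgf X μ t := measure_ge_le_exp_mul_mgf (d:ℝ) ht hint
      _ = Real.exp (-t * (d:ℝ)) * ∏ i ∈ Finset.Icc 1 w, mgf (Y i) μ t := by
          rw [hXsum, hYindep.mgf_sum hYmeas]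
      _ ≤ Real.exp (-t * (d:ℝ)) *
          ∏ i ∈ Finset.Icc 1 w, Real.exp ((t + t ^ 2 * M) * e i) := by
          apply mul_le_mul_of_nonneg_left _ (Real.exp_pos _).le
          apply Finset.prod_le_prod (fun i _ => mgf_nonneg)
          intro i hi
          exact hmgf t ht htM i (Finset.mem_Icc.1 hi).1
      _ = Real.exp (-t * d + (t + t ^ 2 * M) * (∑ i ∈ Finset.Icc 1 w, e i)) := by
          rw [← Real.exp_sum, ← Real.exp_add, ← Finset.mul_sum]
  -- main per-d bound under regularity conditions on f d
  have main : ∀ d : ℕ, 1 ≤ f d →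
      M + K * (2 * Real.sqrt (f d)) ≤ (r / 2) * (f d) ^ ((1:ℝ)/2 + ε) →
      M + K * (2 * Real.sqrt (f d)) ≤ f d →
      ∀ w : ℕ, (w : ℝ) < f d - (f d) ^ ((1:ℝ)/2 + ε) →
      (μ {ω | S w ω = (d : ℤ)}).toReal ≤ Real.exp (-c * (f d) ^ (2 * ε)) := by
    intro d hF1 hF2 hF3 w hw
    set F := f d with hFdef
    have hF0 : (0:ℝ) < F := lt_of_lt_of_le one_pos hF1
    set Q : ℝ := F ^ ((1:ℝ)/2 + ε) with hQdef
    set P : ℝ := F ^ (2 * ε) with hPdef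
    have hQ0 : 0 < Q := Real.rpow_pos_of_pos hF0 _
    have hP0 : 0 < P := Real.rpow_pos_of_pos hF0 _
    have hrF : r * F = (d:ℝ) := by
      rw [hrdef, hFdef, hf d]
      field_simp
    set t : ℝ := γ * F ^ (ε - 1/2) with htdef
    have htp : 0 < F ^ (ε - 1/2) := Real.rpow_pos_of_pos hF0 _
    have ht0 : 0 < t := by positivity
    have htle : t ≤ γ := by
      have h1 : F ^ (ε - 1/2) ≤ 1 :=
        Real.rpow_le_one_of_one_le_of_nonpos hF1 (by linarith)
      nlinarith
    have htM : t * M ≤ 1 := by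
      have hγM : γ * M ≤ 1 := by
        rw [hγdef]
        rw [div_mul_eq_mul_div, div_le_one (by positivity)]
        nlinarith
      nlinarith
    have hwF : (w:ℝ) ≤ F := by nlinarith
    have hsw : Real.sqrt (w:ℝ) ≤ Real.sqrt F := Real.sqrt_le_sqrt hwF
    have hm_le := hm w
    set m : ℝ := ∑ i ∈ Finset.Icc 1 w, e i with hmdef
    have hm0 : 0 ≤ m := Finset.sum_nonneg (fun i _ => he_nonneg i)
    have hKsw : K * (2 * Real.sqrt (w:ℝ)) ≤ K * (2 * Real.sqrt F) := by nlinarith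
    have hmc6 : m ≤ c₆ * F := by
      rw [hc6def]
      nlinarith
    have hgap : (r/2) * Q ≤ (d:ℝ) - m := by
      have h6 : r * (w:ℝ) ≤ r * (F - Q) := by nlinarith
      nlinarith
    -- exponent computations
    have e1 : t * Q = γ * P := by
      rw [htdef, hQdef, hPdef]
      have hx : (ε - 1/2) + ((1:ℝ)/2 + ε) = 2 * ε := by ring
      rw [mul_assoc, ← Real.rpow_add hF0, hx]
    have e2 : t ^ 2 * F = γ ^ 2 * P := by
      have h1 : (F ^ (ε - 1/2)) ^ (2:ℕ) = F ^ ((ε - 1/2) * 2) := by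
        rw [← Real.rpow_natCast (F ^ (ε - 1/2)) 2, ← Real.rpow_mul hF0.le]
        norm_num
      have h2 : F ^ ((ε - 1/2) * 2) * F = F ^ (2 * ε) := by
        rw [show 2 * ε = (ε - 1/2) * 2 + 1 from by ring, Real.rpow_add hF0, Real.rpow_one]
      rw [htdef, hPdef, mul_pow, h1, mul_assoc, h2]
    have s1 : t * ((r/2) * Q) ≤ t * ((d:ℝ) - m) :=
      mul_le_mul_of_nonneg_left hgap ht0.le
    have s2 : t ^ 2 * M * m ≤ t ^ 2 * M * (c₆ * F) :=
      mul_le_mul_of_nonneg_left hmc6 (by positivity)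
    have s3 : t ^ 2 * M * (c₆ * F) = M * c₆ * (γ ^ 2 * P) := by
      rw [← e2]; ring
    have s4 : t * ((r/2) * Q) = (r/2) * (γ * P) := by
      rw [← e1]; ring
    have h8 : M * c₆ * (γ ^ 2 * P) = (r/4) * (γ * P) := by
      have : M * c₆ * γ = r / 4 := by
        rw [hγdef, ← mul_div_assoc,
          div_eq_div_iff (ne_of_gt (by positivity : (0:ℝ) < 4 * M * c₆))
            (by norm_num : (4:ℝ) ≠ 0)]
        ring
      calc M * c₆ * (γ ^ 2 * P) = (M * c₆ * γ) * (γ * P) := by ring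
        _ = (r/4) * (γ * P) := by rw [this]
    have hfinal : -t * (d:ℝ) + (t + t ^ 2 * M) * m ≤ -c * P := by
      have hexpand : -t * (d:ℝ) + (t + t ^ 2 * M) * m =
          -(t * ((d:ℝ) - m)) + t ^ 2 * M * m := by ring
      rw [hexpand, hcdef]
      have : -(t * ((d:ℝ) - m)) ≤ -((r/2) * (γ * P)) := by
        rw [← s4]; linarith
      have h9 : t ^ 2 * M * m ≤ (r/4) * (γ * P) := by
        rw [← h8, ← s3]; exact s2
      have : -(γ * r / 4 * P) = -((r/2) * (γ * P)) + (r/4) * (γ * P) := by ring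
      linarith
    calc (μ {ω | S w ω = (d:ℤ)}).toReal ≤ _ := key t ht0.le htM d w
      _ ≤ Real.exp (-c * P) := Real.exp_le_exp.mpr hfinal
  -- eventual regularity
  have hFtend : Tendsto f atTop atTop := by
    have h1 : Tendsto (fun d : ℕ => (α / α₂) * (d : ℝ)) atTop atTop :=
      (tendsto_natCast_atTop_atTop).const_mul_atTop (div_pos hα0 hα₂)
    exact h1.congr (fun d => (hf d).symm)
  have hQ : ∀ᶠ x : ℝ in atTop, (1 ≤ x ∧ 2 ≤ x) ∧
      M + K * (2 * Real.sqrt x) ≤ (r / 2) * x ^ ((1:ℝ)/2 + ε) ∧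
      M + K * (2 * Real.sqrt x) ≤ x := by
    have hsqt : Tendsto Real.sqrt atTop atTop := by
      have h := tendsto_rpow_atTop (by norm_num : (0:ℝ) < 1/2)
      exact h.congr' (by filter_upwards with x using (Real.sqrt_eq_rpow x).symm)
    have hpe : Tendsto (fun x : ℝ => x ^ ε) atTop atTop := tendsto_rpow_atTop hε0
    filter_upwards [eventually_ge_atTop (2:ℝ),
      hsqt.eventually_ge_atTop (2 * K + M + 1),
      hpe.eventually_ge_atTop ((2 / r) * (2 * K + M + 1))] with x h2 hsqx hex
    have h1 : (1:ℝ) ≤ x := by linarith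
    have hx0 : (0:ℝ) < x := by linarith
    have hs0 : 0 ≤ Real.sqrt x := Real.sqrt_nonneg x
    have hs1 : 1 ≤ Real.sqrt x := by nlinarith
    have hxx : Real.sqrt x * Real.sqrt x = x := Real.mul_self_sqrt hx0.le
    refine ⟨⟨h1, h2⟩, ?_, ?_⟩
    · have hsplit : x ^ ((1:ℝ)/2 + ε) = Real.sqrt x * x ^ ε := by
        rw [Real.rpow_add hx0, Real.sqrt_eq_rpow]
      rw [hsplit]
      have h9 : (2 * K + M + 1) ≤ (r/2) * x ^ ε := by
        have h10 := mul_le_mul_of_nonneg_left hex (by positivity : (0:ℝ) ≤ r/2)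
        rw [show (r/2) * ((2/r) * (2 * K + M + 1)) = 2 * K + M + 1 from by
          field_simp] at h10
        exact h10
      have h11 := mul_le_mul_of_nonneg_left h9 hs0
      nlinarith [mul_nonneg (show (0:ℝ) ≤ M by linarith)
        (show (0:ℝ) ≤ Real.sqrt x - 1 by linarith)]
    · have h12 := mul_le_mul_of_nonneg_left hsqx hs0
      nlinarith [mul_nonneg (show (0:ℝ) ≤ M by linarith)
        (show (0:ℝ) ≤ Real.sqrt x - 1 by linarith)]
  have hQF : ∀ᶠ d : ℕ in atTop, (1 ≤ f d ∧ 2 ≤ f d) ∧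
      M + K * (2 * Real.sqrt (f d)) ≤ (r / 2) * (f d) ^ ((1:ℝ)/2 + ε) ∧
      M + K * (2 * Real.sqrt (f d)) ≤ f d := hFtend.eventually hQ
  obtain ⟨d₀, hd₀⟩ := eventually_atTop.1 hQF
  constructor
  · refine ⟨c, hc0, 0, d₀, fun d hd w hw => ?_⟩
    have h := main d (hd₀ d hd).1.1 (hd₀ d hd).2.1 (hd₀ d hd).2.2 w hw
    simpa using h
  · set s : ℝ := (2 + 1/α) / (2 * ε) with hsdef
    have houter : Tendsto (fun y : ℝ => 2 * (y ^ s * Real.exp (-c * y))) atTop (nhds 0) := by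
      have h := tendsto_rpow_mul_exp_neg_mul_atTop_nhds_zero s c hc0
      have h2 := h.const_mul (2:ℝ)
      simpa using h2
    have hinner : Tendsto (fun d : ℕ => (f d) ^ (2 * ε)) atTop atTop :=
      (tendsto_rpow_atTop (by linarith : (0:ℝ) < 2 * ε)).comp hFtend
    have hB : Tendsto (fun d : ℕ =>
        2 * (((f d) ^ (2 * ε)) ^ s * Real.exp (-c * (f d) ^ (2 * ε)))) atTop (nhds 0) :=
      houter.comp hinner
    apply squeeze_zero' ?_ ?_ hB
    · filter_upwards with d
      apply mul_nonneg (Finset.sum_nonneg fun w _ => ENNReal.toReal_nonneg)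
      apply Real.rpow_nonneg
      rw [hf]; positivity
    · filter_upwards [eventually_ge_atTop d₀, hQF] with d hd hQd
      obtain ⟨⟨hF1, hF2'⟩, hc1, hc2⟩ := hQd
      set F := f d with hFdef
      have hF0 : (0:ℝ) < F := by linarith
      set T := (Finset.range (Nat.ceil F + 1)).filter
          (fun w : ℕ => (w : ℝ) < F - F ^ ((1:ℝ)/2 + ε)) with hTdef
      set R := Real.exp (-c * F ^ (2 * ε)) with hRdef
      have hR0 : (0:ℝ) < R := Real.exp_pos _
      have hterm : ∀ w ∈ T, (μ {ω | S w ω = (d : ℤ)}).toReal ≤ R := by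
        intro w hw
        exact main d hF1 hc1 hc2 w (Finset.mem_filter.1 hw).2
      have hsum := Finset.sum_le_card_nsmul T _ R hterm
      have hcard : ((T.card : ℝ)) ≤ 2 * F := by
        have h1 : T.card ≤ Nat.ceil F + 1 := by
          rw [hTdef]
          exact le_trans (Finset.card_filter_le _ _) (by rw [Finset.card_range])
        have h2 : ((Nat.ceil F : ℝ)) < F + 1 := Nat.ceil_lt_add_one hF0.le
        calc ((T.card : ℝ)) ≤ ((Nat.ceil F + 1 : ℕ) : ℝ) := by exact_mod_cast h1
          _ = (Nat.ceil F : ℝ) + 1 := by push_cast; ring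
          _ ≤ F + 2 := by linarith
          _ ≤ 2 * F := by linarith
      have hsum' : (∑ w ∈ T, (μ {ω | S w ω = (d : ℤ)}).toReal) ≤ 2 * F * R := by
        calc (∑ w ∈ T, (μ {ω | S w ω = (d : ℤ)}).toReal) ≤ T.card • R := hsum
          _ = (T.card : ℝ) * R := by rw [nsmul_eq_mul]
          _ ≤ 2 * F * R := mul_le_mul_of_nonneg_right hcard hR0.le
      have hrpow0 : (0:ℝ) ≤ F ^ ((1:ℝ) + 1/α) := Real.rpow_nonneg hF0.le _
      have hps : (F ^ (2 * ε)) ^ s = F ^ ((2:ℝ) + 1/α) := by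
        rw [← Real.rpow_mul hF0.le]
        congr 1
        rw [hsdef]
        field_simp
      have hFF : F * F ^ ((1:ℝ) + 1/α) = F ^ ((2:ℝ) + 1/α) := by
        rw [show (2:ℝ) + 1/α = 1 + ((1:ℝ) + 1/α) from by ring,
          Real.rpow_add hF0 1 ((1:ℝ) + 1/α), Real.rpow_one]
      have hsum0 : (0:ℝ) ≤ ∑ w ∈ T, (μ {ω | S w ω = (d : ℤ)}).toReal :=
        Finset.sum_nonneg fun w _ => ENNReal.toReal_nonneg
      calc (∑ w ∈ T, (μ {ω | S w ω = (d : ℤ)}).toReal) * F ^ ((1:ℝ) + 1/α)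
          ≤ (2 * F * R) * F ^ ((1:ℝ) + 1/α) := mul_le_mul_of_nonneg_right hsum' hrpow0
        _ = 2 * ((F * F ^ ((1:ℝ) + 1/α)) * R) := by ring
        _ = 2 * ((F ^ (2 * ε)) ^ s * R) := by rw [hFF, hps]
end
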